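/- Let q = (q₁,q₂,q₃) ∈ ℝ³ and set A = φ(q₁ cos q₂, q₁ sin q₂, q₃) and ρ = (2 + q₁²)^{1/2}. Then ½|A|² = 1 + q₁², and A admits the factorization A = (1/√2) · U(½(q₃+q₂)) · (ρ·I + q₁·K) · U(½(q₃−q₂)). -/

import Mathlib

open Matrix

noncomputable section

/-- `M²`: the space of 2×2 real matrices. -/
abbrev M2 : Type := Matrix (Fin 2) (Fin 2) ℝ

/-- Frobenius inner product `⟨A,B⟩ = tr(AᵀB)`. -/
def mip (A B : M2) : ℝ := (Aᵀ * B).trace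

/-- Frobenius norm `|A| = ⟨A,A⟩^{1/2}`. -/
def fnorm (A : M2) : ℝ := Real.sqrt (mip A A)

/-- The matrix Z = [[0,−1],[1,0]]. -/
def Zm : M2 := !![0, -1; 1, 0]

/-- The matrix K = [[1,0],[0,−1]]. -/
def Km : M2 := !![1, 0; 0, -1]

/-- The matrix M = [[0,1],[1,0]]. -/
def Mm : M2 := !![0, 1; 1, 0]

/-- Cofactor: cof [[a,b],[c,d]] = [[d,−c],[−b,a]]. -/
def cofm (A : M2) : M2 := !![A 1 1, -(A 1 0); -(A 0 1), A 0 0]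

/-- Membership in SO(2,ℝ). -/
def isSO (U : M2) : Prop := U.det = 1 ∧ U⁻¹ = Uᵀ

/-- The rotation U(θ) = cos θ·I + sin θ·Z. -/
def Um (θ : ℝ) : M2 := Real.cos θ • (1 : M2) + Real.sin θ • Zm

/-- Invariant X₁(A,B) = ½|B|² + (κ/2)|A|². -/
def X1 (κ : ℝ) (A B : M2) : ℝ := (1/2) * mip B B + (κ/2) * mip A A

/-- Invariant X₂(A,B) = ½⟨ZA − AZ, B⟩. -/
def X2 (A B : M2) : ℝ := (1/2) * mip (Zm * A - A * Zm) B

/-- Invariant X₃(A,B) = ½⟨ZA + AZ, B⟩. -/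
def X3 (A B : M2) : ℝ := (1/2) * mip (Zm * A + A * Zm) B

/-- Lagrange multiplier Λ(A,B) = 2(κ − det B)/|A|². -/
def Lam (κ : ℝ) (A B : M2) : ℝ := 2 * (κ - B.det) / (mip A A)

attribute [local instance] Matrix.normedAddCommGroup Matrix.normedSpace

/-- ρ(x) = (2 + x₁² + x₂²)^{1/2}. -/
def rho (x1 x2 : ℝ) : ℝ := Real.sqrt (2 + x1 ^ 2 + x2 ^ 2)

/-- φ(x) = (1/√2)(ρ(x)cos x₃ · I + ρ(x)sin x₃ · Z + x₁·K + x₂·M). -/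
def phi (x1 x2 x3 : ℝ) : M2 :=
  (Real.sqrt 2)⁻¹ •
    ((rho x1 x2 * Real.cos x3) • (1 : M2) + (rho x1 x2 * Real.sin x3) • Zm
      + x1 • Km + x2 • Mm)

/-- factorization of A = φ(q₁cos q₂, q₁sin q₂, q₃). -/
theorem Aform (q1 q2 q3 : ℝ)
    (A : M2) (hA : A = phi (q1 * Real.cos q2) (q1 * Real.sin q2) q3)
    (ρ : ℝ) (hρ : ρ = Real.sqrt (2 + q1 ^ 2)) :
    (1/2) * mip A A = 1 + q1 ^ 2 ∧
    A = (Real.sqrt 2)⁻¹ •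
      (Um ((q3 + q2) / 2) * (ρ • (1 : M2) + q1 • Km) * Um ((q3 - q2) / 2)) := by
  have hrho : rho (q1 * Real.cos q2) (q1 * Real.sin q2) = ρ := by
    rw [rho, hρ]
    congr 1
    have := Real.sin_sq_add_cos_sq q2
    ring_nf
    nlinarith [Real.sin_sq_add_cos_sq q2]
  have hρsq : ρ ^ 2 = 2 + q1 ^ 2 := by
    rw [hρ]; exact Real.sq_sqrt (by positivity)
  have h2 : (Real.sqrt 2 : ℝ) ^ 2 = 2 := Real.sq_sqrt (by norm_num)
  have hs2 : (Real.sqrt 2 : ℝ) ≠ 0 := by positivity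
  subst hA
  rw [phi, hrho]
  constructor
  · simp only [mip, Matrix.trace, Matrix.diag, Matrix.smul_apply, Matrix.mul_apply,
      Matrix.transpose_apply, Fin.sum_univ_two, Zm, Km, Mm]
    norm_num [Matrix.smul_apply, Matrix.one_apply, Matrix.add_apply, Matrix.cons_val_zero,
      Matrix.cons_val_one, Matrix.head_cons, Matrix.head_fin_const]
    have e : ((Real.sqrt 2)⁻¹)^2 = 2⁻¹ := by
      rw [inv_pow, h2]
    linear_combination ((Real.sqrt 2)⁻¹ ^ 2 * ρ ^ 2) * Real.sin_sq_add_cos_sq q3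
      + ((Real.sqrt 2)⁻¹ ^ 2 * q1 ^ 2) * Real.sin_sq_add_cos_sq q2
      + (ρ ^ 2 + q1 ^ 2) * e + (1/2) * hρsq
  · have hq3 : q3 = (q3 + q2) / 2 + (q3 - q2) / 2 := by ring
    have hq2 : q2 = (q3 + q2) / 2 - (q3 - q2) / 2 := by ring
    rw [hq3, hq2]
    set a := (q3 + q2) / 2
    set b := (q3 - q2) / 2
    rw [Um, Um]
    ext i j
    fin_cases i <;> fin_cases j <;>
      simp [Zm, Km, Mm, Matrix.mul_apply, Fin.sum_univ_two, Matrix.one_apply,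
        Real.cos_add, Real.sin_add, Real.cos_sub, Real.sin_sub] <;> (simp only [a, b]; ring_nf)
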